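/- A breadth-first construction yields the grounded labelling: define inductively I_0 = {x ∈ Ar : x has no attackers}, O_{k+1} = {y : some attacker of y is in I_0 ∪ ... ∪ I_k}, I_{k+1} = {x : every attacker of x is in O_1 ∪ ... ∪ O_{k+1}}. Then the labelling assigning in to ∪_k I_k, out to ∪_k O_k, and undec otherwise, equals the grounded labelling of the framework. -/
import Mathlib


inductive Label where
  | inn | out | und
deriving DecidableEq

/-- A labelling is admissible if every in-labelled argument has all its attackers
labelled out, and every out-labelled argument has at least one in-labelled attacker. -/
def Admissible {Ar : Type*} (att : Ar → Ar → Prop) (L : Ar → Label) : Prop :=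
  (∀ x, L x = Label.inn → ∀ y, att y x → L y = Label.out) ∧
  (∀ x, L x = Label.out → ∃ y, att y x ∧ L y = Label.inn)

/-- A min-max numbering (with only natural-number values): in-arguments are numbered
1 + max of the numbers of their out-labelled attackers (max ∅ = 0), and out-arguments
1 + min of the numbers of their in-labelled attackers. -/
def IsMinMax {Ar : Type*} (att : Ar → Ar → Prop) (L : Ar → Label) (MM : Ar → ℕ) : Prop :=
  (∀ x, L x = Label.inn → MM x = sSup (MM '' {y | att y x ∧ L y = Label.out}) + 1) ∧
  (∀ x, L x = Label.out → MM x = sInf (MM '' {y | att y x ∧ L y = Label.inn}) + 1)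

/-- Strongly admissible: admissible and admitting a min-max numbering with only
natural-number (finite) values. -/
def StronglyAdmissible {Ar : Type*} (att : Ar → Ar → Prop) (L : Ar → Label) : Prop :=
  Admissible att L ∧ ∃ MM : Ar → ℕ, IsMinMax att L MM

/-- Complete labelling: admissible, and every undec argument has an undec attacker
and no in-labelled attacker. -/
def CompleteLab {Ar : Type*} (att : Ar → Ar → Prop) (L : Ar → Label) : Prop :=
  Admissible att L ∧
  ∀ x, L x = Label.und →
    (∃ y, att y x ∧ L y = Label.und) ∧ ∀ y, att y x → L y ≠ Label.inn

/-- The order on labellings: Lab1 ⊑ Lab2 iff in(Lab1) ⊆ in(Lab2) and out(Lab1) ⊆ out(Lab2). -/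
def LabLe {Ar : Type*} (L1 L2 : Ar → Label) : Prop :=
  (∀ x, L1 x = Label.inn → L2 x = Label.inn) ∧
  (∀ x, L1 x = Label.out → L2 x = Label.out)

/-- The breadth-first construction yields the grounded labelling. -/
theorem breadthFirst_grounded
    {Ar : Type*} [Fintype Ar] (att : Ar → Ar → Prop)
    (I O : ℕ → Set Ar)
    (hI0 : I 0 = {x | ∀ y, ¬ att y x})
    (hO0 : O 0 = ∅)
    (hO : ∀ k, O (k+1) = {y | ∃ x, att x y ∧ ∃ j ≤ k, x ∈ I j})
    (hI : ∀ k, I (k+1) = {x | ∀ y, att y x → ∃ j, 1 ≤ j ∧ j ≤ k+1 ∧ y ∈ O j})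
    (Lgr : Ar → Label)
    (hgr : CompleteLab att Lgr ∧ ∀ L, CompleteLab att L → LabLe Lgr L) :
    ∀ x, (Lgr x = Label.inn ↔ ∃ k, x ∈ I k) ∧ (Lgr x = Label.out ↔ ∃ k, x ∈ O k) := by

  classical
  obtain ⟨⟨⟨hin, hout⟩, hund⟩, hmin⟩ := hgr
  -- (a) every member of I k is in, every member of O k is out, under Lgr
  have key : ∀ k, (∀ x ∈ I k, Lgr x = Label.inn) ∧ (∀ x ∈ O k, Lgr x = Label.out) := by
    intro k
    induction k using Nat.strong_induction_on with
    | _ k ih =>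
      have hOcase : ∀ x ∈ O k, Lgr x = Label.out := by
        intro x hx
        cases k with
        | zero => rw [hO0] at hx; exact absurd hx (Set.notMem_empty x)
        | succ m =>
          rw [hO m] at hx
          obtain ⟨y, hyx, j, hjm, hyI⟩ := hx
          have hy : Lgr y = Label.inn := (ih j (Nat.lt_succ_of_le hjm)).1 y hyI
          cases hL : Lgr x with
          | inn =>
            have := hin x hL y hyx; rw [hy] at this; exact absurd this (by simp)
          | out => rfl
          | und => exact absurd hy ((hund x hL).2 y hyx)
      refine ⟨?_, hOcase⟩
      intro x hx
      cases k with
      | zero =>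
        rw [hI0] at hx
        cases hL : Lgr x with
        | inn => rfl
        | out => obtain ⟨y, hyx, _⟩ := hout x hL; exact absurd hyx (hx y)
        | und => obtain ⟨⟨y, hyx, _⟩, _⟩ := hund x hL; exact absurd hyx (hx y)
      | succ m =>
        rw [hI m] at hx
        have hatt : ∀ y, att y x → Lgr y = Label.out := by
          intro y hyx
          obtain ⟨j, hj1, hjm, hyO⟩ := hx y hyx
          rcases Nat.lt_or_ge j (m+1) with h | h
          · exact (ih j h).2 y hyO
          · have hje : j = m + 1 := le_antisymm hjm h
            subst hje
            exact hOcase y hyO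
        cases hL : Lgr x with
        | inn => rfl
        | out =>
          obtain ⟨y, hyx, hy⟩ := hout x hL
          rw [hatt y hyx] at hy; exact absurd hy (by simp)
        | und =>
          obtain ⟨⟨y, hyx, hy⟩, _⟩ := hund x hL
          rw [hatt y hyx] at hy; exact absurd hy (by simp)
  -- the constructed labelling
  set L : Ar → Label := fun x =>
    if ∃ k, x ∈ I k then Label.inn
    else if ∃ k, x ∈ O k then Label.out else Label.und with hLdef
  have hLinn : ∀ x, L x = Label.inn ↔ ∃ k, x ∈ I k := by
    intro x
    constructor
    · intro h
      by_contra hc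
      simp only [hLdef, if_neg hc] at h
      split at h <;> simp at h
    · intro h; simp only [hLdef, if_pos h]
  have hLout : ∀ x, L x = Label.out ↔ ∃ k, x ∈ O k := by
    intro x
    constructor
    · intro h
      by_cases hc : ∃ k, x ∈ I k
      · simp [hLdef, if_pos hc] at h
      · simp only [hLdef, if_neg hc] at h
        by_contra hc2
        rw [if_neg hc2] at h; exact absurd h (by simp)
    · intro h
      have hni : ¬ ∃ k, x ∈ I k := by
        rintro ⟨k, hk⟩
        obtain ⟨j, hj⟩ := h
        have h1 := (key k).1 x hk
        have h2 := (key j).2 x hj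
        rw [h1] at h2; exact absurd h2 (by simp)
      simp only [hLdef, if_neg hni, if_pos h]
  have hLcomp : CompleteLab att L := by
    refine ⟨⟨?_, ?_⟩, ?_⟩
    · intro x hx y hyx
      obtain ⟨k, hk⟩ := (hLinn x).1 hx
      cases k with
      | zero => rw [hI0] at hk; exact absurd hyx (hk y)
      | succ m =>
        rw [hI m] at hk
        obtain ⟨j, _, _, hyO⟩ := hk y hyx
        exact (hLout y).2 ⟨j, hyO⟩
    · intro x hx
      obtain ⟨k, hk⟩ := (hLout x).1 hx
      cases k with
      | zero => rw [hO0] at hk; exact absurd hk (Set.notMem_empty x)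
      | succ m =>
        rw [hO m] at hk
        obtain ⟨y, hyx, j, _, hyI⟩ := hk
        exact ⟨y, hyx, (hLinn y).2 ⟨j, hyI⟩⟩
    · intro x hx
      have hnoin : ∀ y, att y x → L y ≠ Label.inn := by
        intro y hyx hy
        obtain ⟨j, hj⟩ := (hLinn y).1 hy
        have : x ∈ O (j+1) := by
          rw [hO j]; exact ⟨y, hyx, j, le_refl j, hj⟩
        have := (hLout x).2 ⟨j+1, this⟩
        rw [hx] at this; exact absurd this (by simp)
      refine ⟨?_, hnoin⟩
      by_contra hc
      push_neg at hc
      have hallout : ∀ y, att y x → L y = Label.out := by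
        intro y hyx
        cases hLy : L y with
        | inn => exact absurd hLy (hnoin y hyx)
        | out => rfl
        | und => exact absurd hLy (hc y hyx)
      set f : Ar → ℕ := fun y => if h : ∃ k, y ∈ O k then h.choose else 0 with hf
      set M : ℕ := Finset.univ.sup f with hM
      have hxI : x ∈ I (M+1) := by
        rw [hI M]
        intro y hyx
        have hy := (hLout y).1 (hallout y hyx)
        have hyO : y ∈ O (f y) := by
          simp only [hf, dif_pos hy]; exact hy.choose_spec
        have h1 : 1 ≤ f y := by
          rcases Nat.eq_zero_or_pos (f y) with h0 | h
          · rw [h0, hO0] at hyO; exact absurd hyO (Set.notMem_empty y)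
          · exact h
        exact ⟨f y, h1, le_trans (Finset.le_sup (Finset.mem_univ y)) (Nat.le_succ M), hyO⟩
      have := (hLinn x).2 ⟨M+1, hxI⟩
      rw [hx] at this; exact absurd this (by simp)
  have hle := hmin L hLcomp
  intro x
  constructor
  · constructor
    · intro h; exact (hLinn x).1 (hle.1 x h)
    · rintro ⟨k, hk⟩; exact (key k).1 x hk
  · constructor
    · intro h; exact (hLout x).1 (hle.2 x h)
    · rintro ⟨k, hk⟩; exact (key k).2 x hk
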